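/- Let {A_n}_{n=1}^{n_s}, {B_n}_{n=1}^{n_s} be real L×L matrices forming an amicable orthogonal design, let s̄_1, s̃_1, …, s̄_{n_s}, s̃_{n_s} be real numbers, and set X = (1/√n_s) Σ_{n′=1}^{n_s} ( s̄_{n′} A_{n′} + i s̃_{n′} B_{n′} ). Let C be a complex L×L matrix with C C^H = I_L, let m : {1,…,J} → {1,…,L} be injective, let g_1, …, g_J be complex numbers, and let d = Σ_{j=1}^J g_j · (row m(j) of C) ∈ ℂ^{1×L}. Then for every index n, Re( tr( A_n · X^H · d^H d ) ) = (s̄_n/√n_s) · Σ_{j=1}^J |g_j|². In particular this quantity is unchanged when each g_j is replaced by e^{iφ_j} g_j for arbitrary real phases φ_j. -/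

import Mathlib

open Matrix Complex

/-- An amicable orthogonal design: real `L × L` matrices `A n`, `B n` (`n = 1, …, n_s`)
satisfying conditions (34) of the paper. -/
def IsAmicableDesign {L ns : ℕ} (A B : Fin ns → Matrix (Fin L) (Fin L) ℝ) : Prop :=
  (∀ n, A n * (A n)ᵀ = 1) ∧ (∀ n, B n * (B n)ᵀ = 1) ∧
  (∀ n n', n ≠ n' → A n * (A n')ᵀ = -(A n' * (A n)ᵀ)) ∧
  (∀ n n', n ≠ n' → B n * (B n')ᵀ = -(B n' * (B n)ᵀ)) ∧
  (∀ n n', A n * (B n')ᵀ = B n' * (A n)ᵀ)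

/-- The space-time code matrix `X = (1/√n_s) Σ_n (s̄_n A_n + i s̃_n B_n)`, with the real
matrices viewed as complex entrywise. -/
noncomputable def codeX {L ns : ℕ} (A B : Fin ns → Matrix (Fin L) (Fin L) ℝ)
    (sbar stil : Fin ns → ℝ) : Matrix (Fin L) (Fin L) ℂ :=
  ((Real.sqrt ns : ℂ))⁻¹ •
    ∑ n, ((sbar n : ℂ) • (A n).map Complex.ofReal
      + ((stil n : ℂ) * Complex.I) • (B n).map Complex.ofReal)

/-- The (noise-free) desired signal row vector `d = Σ_j g_j · (row m(j) of C)`. -/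
noncomputable def desiredRow {L J : ℕ} (C : Matrix (Fin L) (Fin L) ℂ)
    (m : Fin J → Fin L) (g : Fin J → ℂ) : Fin L → ℂ :=
  fun l => ∑ j, g j * C (m j) l

/-- The rank-one Hermitian outer product `dᴴ d` of a row vector `d`. -/
noncomputable def outerRow {L : ℕ} (d : Fin L → ℂ) : Matrix (Fin L) (Fin L) ℂ :=
  Matrix.of fun l l' => (starRingEnd ℂ) (d l) * d l'

lemma aux_conjTranspose_map_ofReal {L : ℕ} (M : Matrix (Fin L) (Fin L) ℝ) :
    (M.map Complex.ofReal)ᴴ = Mᵀ.map Complex.ofReal := by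
  ext i j; simp [Matrix.conjTranspose_apply, Matrix.map_apply]

lemma aux_map_ofReal_mul {L : ℕ} (M N : Matrix (Fin L) (Fin L) ℝ) :
    (M * N).map Complex.ofReal = M.map Complex.ofReal * N.map Complex.ofReal := by
  ext i j; simp [Matrix.mul_apply, Matrix.map_apply]

lemma aux_key_matrix {L ns : ℕ} (A B : Fin ns → Matrix (Fin L) (Fin L) ℝ)
    (hAB : IsAmicableDesign A B) (sbar stil : Fin ns → ℝ) (n : Fin ns) :
    (A n).map Complex.ofReal * (codeX A B sbar stil)ᴴ
      + ((A n).map Complex.ofReal * (codeX A B sbar stil)ᴴ)ᴴ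
      = ((2 * sbar n / Real.sqrt ns : ℝ) : ℂ) • 1 := by
  obtain ⟨hA, hB, hAA, hBB, hABc⟩ := hAB
  have hstarR : ∀ x : ℝ, star ((x : ℝ) : ℂ) = ((x : ℝ) : ℂ) := fun x => by
    simp [Complex.star_def, Complex.conj_ofReal]
  have hstarI : ∀ x : ℝ, star (((x : ℝ) : ℂ) * Complex.I) = -(((x : ℝ) : ℂ) * Complex.I) := by
    intro x
    rw [star_mul']
    rw [hstarR]
    simp [Complex.star_def, Complex.conj_I]
  set r : ℂ := ((Real.sqrt ns : ℂ))⁻¹ with hr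
  have hrs : star r = r := by
    simp [hr, ← Complex.ofReal_inv]
  set S : Matrix (Fin L) (Fin L) ℂ :=
    ∑ n', ((sbar n' : ℂ) • ((A n')ᵀ).map Complex.ofReal
      - ((stil n' : ℂ) * Complex.I) • ((B n')ᵀ).map Complex.ofReal) with hS
  have hXH : (codeX A B sbar stil)ᴴ = r • S := by
    unfold codeX
    rw [Matrix.conjTranspose_smul, hrs, Matrix.conjTranspose_sum, hS]
    congr 1
    refine Finset.sum_congr rfl fun n' _ => ?_
    rw [Matrix.conjTranspose_add, Matrix.conjTranspose_smul, Matrix.conjTranspose_smul,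
      aux_conjTranspose_map_ofReal, aux_conjTranspose_map_ofReal, hstarI, hstarR,
      neg_smul, ← sub_eq_add_neg]
  have hterm : ∀ n', (A n).map Complex.ofReal * ((sbar n' : ℂ) • ((A n')ᵀ).map Complex.ofReal
        - ((stil n' : ℂ) * Complex.I) • ((B n')ᵀ).map Complex.ofReal)
      + ((A n).map Complex.ofReal * ((sbar n' : ℂ) • ((A n')ᵀ).map Complex.ofReal
        - ((stil n' : ℂ) * Complex.I) • ((B n')ᵀ).map Complex.ofReal))ᴴ
      = (sbar n' : ℂ) • ((A n * (A n')ᵀ + A n' * (A n)ᵀ).map Complex.ofReal) := by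
    intro n'
    rw [Matrix.mul_sub, Matrix.mul_smul, Matrix.mul_smul, Matrix.conjTranspose_sub,
      Matrix.conjTranspose_smul, Matrix.conjTranspose_smul, Matrix.conjTranspose_mul,
      Matrix.conjTranspose_mul, hstarI, hstarR]
    simp only [aux_conjTranspose_map_ofReal, Matrix.transpose_transpose, neg_smul, neg_neg]
    rw [← aux_map_ofReal_mul, ← aux_map_ofReal_mul, ← aux_map_ofReal_mul,
      ← aux_map_ofReal_mul, hABc, Matrix.map_add Complex.ofReal (fun a b => Complex.ofReal_add a b), smul_add]
    abel
  have key2 : (A n).map Complex.ofReal * S + ((A n).map Complex.ofReal * S)ᴴ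
      = ((2 * sbar n : ℝ) : ℂ) • 1 := by
    rw [hS, Matrix.mul_sum, Matrix.conjTranspose_sum, ← Finset.sum_add_distrib]
    rw [Finset.sum_congr rfl fun n' _ => hterm n']
    rw [Finset.sum_eq_single n]
    · rw [hA n]
      have h1 : ((1 : Matrix (Fin L) (Fin L) ℝ) + 1).map Complex.ofReal
          = (2 : ℂ) • (1 : Matrix (Fin L) (Fin L) ℂ) := by
        ext i j
        simp [Matrix.map_apply, Matrix.one_apply]
        split <;> norm_num
      rw [h1, smul_smul]
      push_cast
      ring_nf
    · intro n' _ hne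
      rw [hAA n n' (Ne.symm hne)]
      simp
    · simp
  calc (A n).map Complex.ofReal * (codeX A B sbar stil)ᴴ
        + ((A n).map Complex.ofReal * (codeX A B sbar stil)ᴴ)ᴴ
      = r • ((A n).map Complex.ofReal * S + ((A n).map Complex.ofReal * S)ᴴ) := by
        rw [hXH, Matrix.mul_smul, Matrix.conjTranspose_smul, hrs, smul_add]
    _ = ((2 * sbar n / Real.sqrt ns : ℝ) : ℂ) • 1 := by
        rw [key2, smul_smul]
        congr 1
        rw [hr]
        push_cast
        ring

lemma aux_trace_outer {L J : ℕ} (C : Matrix (Fin L) (Fin L) ℂ) (hC : C * Cᴴ = 1)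
    (m : Fin J → Fin L) (hm : Function.Injective m) (g : Fin J → ℂ) :
    Matrix.trace (outerRow (desiredRow C m g)) = ((∑ j, ‖g j‖ ^ 2 : ℝ) : ℂ) := by
  have key : ∀ j j' : Fin J, (∑ l, (starRingEnd ℂ) (C (m j) l) * C (m j') l)
      = if j' = j then 1 else 0 := by
    intro j j'
    have : (C * Cᴴ) (m j') (m j) = ∑ l, C (m j') l * (starRingEnd ℂ) (C (m j) l) := by
      simp [Matrix.mul_apply, Matrix.conjTranspose_apply]
    rw [hC] at this
    rw [Finset.sum_congr rfl fun l _ => mul_comm _ _, ← this, Matrix.one_apply]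
    simp [hm.eq_iff]
  unfold Matrix.trace outerRow desiredRow
  simp only [Matrix.diag_apply, Matrix.of_apply, map_sum, _root_.map_mul]
  calc (∑ l, (∑ j, (starRingEnd ℂ) (g j) * (starRingEnd ℂ) (C (m j) l)) * ∑ j', g j' * C (m j') l)
      = ∑ l, ∑ j, ∑ j', ((starRingEnd ℂ) (g j) * (starRingEnd ℂ) (C (m j) l))
          * (g j' * C (m j') l) := by
        exact Finset.sum_congr rfl fun l _ => Finset.sum_mul_sum _ _ _ _
    _ = ∑ j, ∑ j', ((starRingEnd ℂ) (g j) * g j') *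
          ∑ l, (starRingEnd ℂ) (C (m j) l) * C (m j') l := by
        rw [Finset.sum_comm]
        refine Finset.sum_congr rfl fun j _ => ?_
        rw [Finset.sum_comm]
        refine Finset.sum_congr rfl fun j' _ => ?_
        rw [Finset.mul_sum]
        refine Finset.sum_congr rfl fun l _ => by ring
    _ = ∑ j, (starRingEnd ℂ) (g j) * g j := by
        refine Finset.sum_congr rfl fun j _ => ?_
        rw [Finset.sum_eq_single j]
        · simp [key]
        · intro b _ hb; simp [key, hb]
        · simp
    _ = ((∑ j, ‖g j‖ ^ 2 : ℝ) : ℂ) := by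
        push_cast
        refine Finset.sum_congr rfl fun j _ => ?_
        rw [mul_comm, Complex.mul_conj]
        norm_cast
        simp [Complex.normSq_eq_norm_sq]

/-- The desired-signal component of the differential detection statistic depends only on
the squared magnitudes of the effective channels: `Re(tr(A_n Xᴴ dᴴd)) =
(s̄_n/√n_s) Σ_j |g_j|²`, and in particular it is unchanged when each `g_j` is replaced by
`e^{iφ_j} g_j`. -/
theorem re_trace_detection_statistic {L ns J : ℕ}
    (A B : Fin ns → Matrix (Fin L) (Fin L) ℝ) (hAB : IsAmicableDesign A B)
    (sbar stil : Fin ns → ℝ)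
    (C : Matrix (Fin L) (Fin L) ℂ) (hC : C * Cᴴ = 1)
    (m : Fin J → Fin L) (hm : Function.Injective m)
    (g : Fin J → ℂ) (n : Fin ns) :
    (Matrix.trace ((A n).map Complex.ofReal * (codeX A B sbar stil)ᴴ
          * outerRow (desiredRow C m g))).re
        = (sbar n / Real.sqrt ns) * ∑ j, ‖g j‖ ^ 2
      ∧ ∀ φ : Fin J → ℝ,
          (Matrix.trace ((A n).map Complex.ofReal * (codeX A B sbar stil)ᴴ
              * outerRow (desiredRow C m
                  (fun j => Complex.exp ((φ j : ℂ) * Complex.I) * g j)))).re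
            = (Matrix.trace ((A n).map Complex.ofReal * (codeX A B sbar stil)ᴴ
                * outerRow (desiredRow C m g))).re := by
  have main : ∀ g : Fin J → ℂ,
      (Matrix.trace ((A n).map Complex.ofReal * (codeX A B sbar stil)ᴴ
          * outerRow (desiredRow C m g))).re
        = (sbar n / Real.sqrt ns) * ∑ j, ‖g j‖ ^ 2 := by
    intro g
    set M : Matrix (Fin L) (Fin L) ℂ := (A n).map Complex.ofReal * (codeX A B sbar stil)ᴴ
      with hM
    set O : Matrix (Fin L) (Fin L) ℂ := outerRow (desiredRow C m g) with hOdef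
    have hO : Oᴴ = O := by
      ext i j
      simp [hOdef, outerRow, Matrix.conjTranspose_apply, mul_comm]
    have hstar : star (Matrix.trace (M * O)) = Matrix.trace (Mᴴ * O) := by
      rw [← Matrix.trace_conjTranspose, Matrix.conjTranspose_mul, hO, Matrix.trace_mul_comm]
    have h2 : Matrix.trace (M * O) + star (Matrix.trace (M * O))
        = ((2 * sbar n / Real.sqrt ns * ∑ j, ‖g j‖ ^ 2 : ℝ) : ℂ) := by
      rw [hstar, ← Matrix.trace_add, ← Matrix.add_mul,
        aux_key_matrix A B hAB sbar stil n, Matrix.smul_mul, Matrix.one_mul,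
        Matrix.trace_smul, hOdef, aux_trace_outer C hC m hm g]
      rw [smul_eq_mul]
      push_cast
      ring
    have h3 : ((2 * (Matrix.trace (M * O)).re : ℝ) : ℂ)
        = ((2 * sbar n / Real.sqrt ns * ∑ j, ‖g j‖ ^ 2 : ℝ) : ℂ) := by
      rw [← h2, Complex.star_def, Complex.add_conj]
    have h4 : 2 * (Matrix.trace (M * O)).re
        = 2 * sbar n / Real.sqrt ns * ∑ j, ‖g j‖ ^ 2 := by
      exact_mod_cast h3
    have h5 : 2 * (sbar n / Real.sqrt ns * ∑ j, ‖g j‖ ^ 2)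
        = 2 * sbar n / Real.sqrt ns * ∑ j, ‖g j‖ ^ 2 := by ring
    linarith
  refine ⟨main g, fun φ => ?_⟩
  rw [main, main]
  congr 1
  refine Finset.sum_congr rfl fun j _ => ?_
  rw [norm_mul]
  rw [Complex.norm_exp_ofReal_mul_I]
  ring
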